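/- Let ξ be a nonzero centered real random variable with finite p-th moment, p ∈ (1,∞). Set c = E|ξ|/(E|ξ|^p)^{1/p}. Then P(ξ > 0) ≥ (c/2)^{p/(p-1)} · (1 - ((c/2)^{-p/(p-1)} - 1)^{-(p-1)})^{-1/(p-1)}. -/

import Mathlib

open MeasureTheory ProbabilityTheory Real

lemma holder_set_aux {Ω : Type*} [MeasureSpace Ω] (ξ : Ω → ℝ) {p q : ℝ}
    (hpq : p.HolderConjugate q) (hmeas : Measurable ξ)
    (hint : Integrable ξ) (hintp : Integrable (fun ω => |ξ ω| ^ p))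
    {S : Set Ω} (hS : MeasurableSet S) (hfin : ℙ S ≠ ⊤) :
    ∫ ω in S, |ξ ω| ≤ (∫ ω in S, |ξ ω| ^ p) ^ (1/p) * ((ℙ S).toReal) ^ (1/q) := by
  set μS := (ℙ : Measure Ω).restrict S with hμS
  have hg : AEMeasurable (fun ω => ENNReal.ofReal |ξ ω|) μS :=
    (ENNReal.measurable_ofReal.comp hmeas.abs).aemeasurable
  have hH := ENNReal.lintegral_mul_le_Lp_mul_Lq μS hpq hg
    (aemeasurable_const (b := (1 : ENNReal)))
  simp only [Pi.mul_apply, mul_one, ENNReal.one_rpow, lintegral_one,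
    Measure.restrict_apply_univ] at hH
  rw [show μS Set.univ = ℙ S by rw [hμS, Measure.restrict_apply_univ]] at hH
  have hL : ∫⁻ ω, ENNReal.ofReal |ξ ω| ∂μS
      = ENNReal.ofReal (∫ ω in S, |ξ ω|) :=
    (ofReal_integral_eq_lintegral_ofReal hint.abs.restrict
      (ae_of_all _ fun ω => abs_nonneg _)).symm
  have hR1 : (∫⁻ ω, (ENNReal.ofReal |ξ ω|) ^ p ∂μS)
      = ENNReal.ofReal (∫ ω in S, |ξ ω| ^ p) := by
    rw [lintegral_congr fun ω => ENNReal.ofReal_rpow_of_nonneg (abs_nonneg _) hpq.nonneg]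
    exact (ofReal_integral_eq_lintegral_ofReal hintp.restrict
      (ae_of_all _ fun ω => rpow_nonneg (abs_nonneg _) p)).symm
  rw [hL, hR1] at hH
  have hu : 0 ≤ ∫ ω in S, |ξ ω| ^ p :=
    integral_nonneg fun ω => rpow_nonneg (abs_nonneg _) p
  have ht : 0 ≤ (ℙ S).toReal := ENNReal.toReal_nonneg
  rw [show ℙ S = ENNReal.ofReal ((ℙ S).toReal) from (ENNReal.ofReal_toReal hfin).symm,
    ENNReal.ofReal_rpow_of_nonneg hu (one_div_nonneg.mpr hpq.nonneg),
    ENNReal.ofReal_rpow_of_nonneg ht (one_div_nonneg.mpr hpq.symm.nonneg),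
    ← ENNReal.ofReal_mul (by positivity)] at hH
  exact (ENNReal.ofReal_le_ofReal_iff (by positivity)).mp hH

theorem stmt2 {Ω : Type*} [MeasureSpace Ω] [IsProbabilityMeasure (ℙ : Measure Ω)]
    (ξ : Ω → ℝ) (p : ℝ) (hp : 1 < p) (hmeas : Measurable ξ)
    (hint : Integrable ξ) (hintp : Integrable (fun ω => |ξ ω| ^ p))
    (hmean : (∫ ω, ξ ω) = 0) (hnz : 0 < ∫ ω, |ξ ω|)
    (c : ℝ) (hc : c = (∫ ω, |ξ ω|) / (∫ ω, |ξ ω| ^ p) ^ (1 / p)) :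
    ENNReal.ofReal ((c / 2) ^ (p / (p - 1)) *
        (1 - ((c / 2) ^ (-(p / (p - 1))) - 1) ^ (-(p - 1))) ^ (-(1 / (p - 1))))
      ≤ ℙ {ω | 0 < ξ ω} := by
  set A : Set Ω := {ω | 0 < ξ ω} with hA
  have hAm : MeasurableSet A := measurableSet_lt measurable_const hmeas
  set q : ℝ := p / (p - 1) with hq
  have hs : (0:ℝ) < p - 1 := by linarith
  have hpq : p.HolderConjugate q := Real.HolderConjugate.conjExponent hp
  have hp0 : (0:ℝ) < p := by linarith
  -- split integrals
  set m : ℝ := (∫ ω, |ξ ω|) / 2 with hm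
  set M : ℝ := ∫ ω, |ξ ω| ^ p with hM
  set u : ℝ := ∫ ω in A, |ξ ω| ^ p with hu
  set v : ℝ := ∫ ω in Aᶜ, |ξ ω| ^ p with hv
  set t : ℝ := (ℙ A).toReal with ht
  set t' : ℝ := (ℙ Aᶜ).toReal with ht'
  have hm0 : 0 < m := by positivity
  have hsplitξ : (∫ ω in A, ξ ω) + ∫ ω in Aᶜ, ξ ω = 0 := by
    rw [integral_add_compl hAm hint]; exact hmean
  have habsA : (∫ ω in A, |ξ ω|) = ∫ ω in A, ξ ω :=
    setIntegral_congr_fun hAm (fun ω hω => abs_of_pos hω)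
  have habsC : (∫ ω in Aᶜ, |ξ ω|) = - ∫ ω in Aᶜ, ξ ω := by
    rw [← integral_neg]
    exact setIntegral_congr_fun hAm.compl (fun ω hω => abs_of_nonpos (not_lt.mp hω))
  have hsplitabs : (∫ ω in A, |ξ ω|) + ∫ ω in Aᶜ, |ξ ω| = 2 * m := by
    rw [integral_add_compl hAm hint.abs]; rw [hm]; ring
  have hIA : (∫ ω in A, |ξ ω|) = m := by
    rw [habsA]; rw [habsA, habsC] at hsplitabs; linarith
  have hIC : (∫ ω in Aᶜ, |ξ ω|) = m := by
    rw [habsC]; rw [habsA, habsC] at hsplitabs; linarith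
  have hMsum : u + v = M := integral_add_compl hAm hintp
  have hune : 0 ≤ u := integral_nonneg fun ω => rpow_nonneg (abs_nonneg _) p
  have hvne : 0 ≤ v := integral_nonneg fun ω => rpow_nonneg (abs_nonneg _) p
  have hfinA : ℙ A ≠ ⊤ := measure_ne_top _ _
  have hfinC : ℙ Aᶜ ≠ ⊤ := measure_ne_top _ _
  have h1 : m ≤ u ^ (1/p) * t ^ (1/q) := by
    rw [← hIA]; exact holder_set_aux ξ hpq hmeas hint hintp hAm hfinA
  have h2 : m ≤ v ^ (1/p) * t' ^ (1/q) := by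
    rw [← hIC]; exact holder_set_aux ξ hpq hmeas hint hintp hAm.compl hfinC
  have ht0 : 0 ≤ t := ENNReal.toReal_nonneg
  have ht'0 : 0 ≤ t' := ENNReal.toReal_nonneg
  have htpos : 0 < t := by
    rcases ht0.lt_or_eq with h | h
    · exact h
    · exfalso; rw [← h, Real.zero_rpow (by positivity), mul_zero] at h1; linarith
  have ht'pos : 0 < t' := by
    rcases ht'0.lt_or_eq with h | h
    · exact h
    · exfalso; rw [← h, Real.zero_rpow (by positivity), mul_zero] at h2; linarith
  have htt' : t + t' = 1 := by
    rw [ht, ht', ← ENNReal.toReal_add hfinA hfinC, measure_add_measure_compl hAm,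
      measure_univ, ENNReal.toReal_one]
  have hupos : 0 < u := by
    by_contra h
    push_neg at h
    have : u = 0 := le_antisymm h hune
    rw [this, Real.zero_rpow (by positivity), zero_mul] at h1; linarith
  have hvpos : 0 < v := by
    by_contra h
    push_neg at h
    have : v = 0 := le_antisymm h hvne
    rw [this, Real.zero_rpow (by positivity), zero_mul] at h2; linarith
  have hMpos : 0 < M := by linarith
  -- raise Hölder bounds to the p-th power
  have key : ∀ w τ : ℝ, 0 < w → 0 < τ → m ≤ w ^ (1/p) * τ ^ (1/q) →
      m ^ p * τ ^ (-(p-1)) ≤ w := by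
    intro w τ hw hτ hle
    have h3 : m ^ p ≤ (w ^ (1/p) * τ ^ (1/q)) ^ p :=
      Real.rpow_le_rpow hm0.le hle hp0.le
    rw [Real.mul_rpow (by positivity) (by positivity),
      ← Real.rpow_mul hw.le, ← Real.rpow_mul hτ.le] at h3
    have e1 : 1/p * p = 1 := by field_simp
    have e2 : 1/q * p = p - 1 := by rw [hq]; field_simp
    rw [e1, e2, Real.rpow_one] at h3
    calc m ^ p * τ ^ (-(p-1)) ≤ (w * τ ^ (p-1)) * τ ^ (-(p-1)) :=
          mul_le_mul_of_nonneg_right h3 (by positivity)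
      _ = w := by
          rw [mul_assoc, ← Real.rpow_add hτ]
          simp
  have hu' : m ^ p * t ^ (-(p-1)) ≤ u := key u t hupos htpos h1
  have hv' : m ^ p * t' ^ (-(p-1)) ≤ v := key v t' hvpos ht'pos h2
  have hmp : (0:ℝ) < m ^ p := Real.rpow_pos_of_pos hm0 p
  set κ : ℝ := m ^ p / M with hκ
  have hκpos : 0 < κ := div_pos hmp hMpos
  have hsum' : t ^ (-(p-1)) + t' ^ (-(p-1)) ≤ 1/κ := by
    rw [hκ, one_div, inv_div, le_div_iff₀ hmp]
    nlinarith [hu', hv']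
  have hts : 0 < t ^ (-(p-1)) := Real.rpow_pos_of_pos htpos _
  have ht's : 0 < t' ^ (-(p-1)) := Real.rpow_pos_of_pos ht'pos _
  -- t ≥ κ^{1/(p-1)} and t' ≥ κ^{1/(p-1)}
  have keyinv : ∀ τ : ℝ, 0 < τ → τ ^ (-(p-1)) ≤ 1/κ → κ ^ (1/(p-1)) ≤ τ := by
    intro τ hτ hle
    have h4 : κ ≤ τ ^ (p-1) := by
      rw [Real.rpow_neg hτ.le, one_div] at hle
      exact (inv_le_inv₀ (Real.rpow_pos_of_pos hτ _) hκpos).mp hle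
    have h5 := Real.rpow_le_rpow hκpos.le h4 (le_of_lt (by positivity : (0:ℝ) < 1/(p-1)))
    rwa [← Real.rpow_mul hτ.le, mul_one_div, div_self hs.ne', Real.rpow_one] at h5
  have hκt : κ ^ (1/(p-1)) ≤ t := keyinv t htpos (by linarith)
  have hκt' : κ ^ (1/(p-1)) ≤ t' := keyinv t' ht'pos (by linarith)
  have hκs : (0:ℝ) < κ ^ (1/(p-1)) := Real.rpow_pos_of_pos hκpos _
  have hta : 0 < 1 - κ ^ (1/(p-1)) := by linarith
  have hmono : (1 - κ ^ (1/(p-1))) ^ (-(p-1)) ≤ t' ^ (-(p-1)) :=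
    Real.rpow_le_rpow_of_nonpos ht'pos (by linarith) (by linarith)
  set D : ℝ := 1/κ - (1 - κ ^ (1/(p-1))) ^ (-(p-1)) with hD
  have hDt : t ^ (-(p-1)) ≤ D := by rw [hD]; linarith
  have hDpos : 0 < D := lt_of_lt_of_le hts hDt
  have htD : D ^ (-(1/(p-1))) ≤ t := by
    have h6 := Real.rpow_le_rpow_of_nonpos hts hDt
      (by linarith [le_of_lt (by positivity : (0:ℝ) < 1/(p-1))] : -(1/(p-1)) ≤ 0)
    rwa [← Real.rpow_mul htpos.le,
      show (-(p-1)) * (-(1/(p-1))) = 1 by field_simp, Real.rpow_one] at h6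
  -- identify the bound with D ^ (-(1/(p-1)))
  have hc2 : c / 2 = m / M ^ (1/p) := by rw [hc, hm]; ring
  have hMp : (0:ℝ) < M ^ (1/p) := Real.rpow_pos_of_pos hMpos _
  have hc2pos : 0 < c / 2 := by rw [hc2]; positivity
  have hcpκ : (c/2) ^ p = κ := by
    rw [hc2, Real.div_rpow hm0.le hMp.le, ← Real.rpow_mul hMpos.le,
      one_div_mul_cancel hp0.ne', Real.rpow_one, hκ]
  have hB1 : (c/2) ^ q = κ ^ (1/(p-1)) := by
    rw [show q = p * (1/(p-1)) by rw [hq]; ring, Real.rpow_mul hc2pos.le, hcpκ]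
  have hB2 : (c/2) ^ (-q) = κ ^ (-(1/(p-1))) := by
    rw [Real.rpow_neg hc2pos.le, hB1, ← Real.rpow_neg hκpos.le]
  have hE2 : (κ ^ (-(1/(p-1))) - 1) ^ (-(p-1)) = κ * (1 - κ ^ (1/(p-1))) ^ (-(p-1)) := by
    have hE : κ ^ (-(1/(p-1))) - 1 = (1 - κ ^ (1/(p-1))) / κ ^ (1/(p-1)) := by
      rw [Real.rpow_neg hκpos.le]; field_simp
    rw [hE, Real.div_rpow hta.le hκs.le, ← Real.rpow_mul hκpos.le,
      show 1/(p-1) * (-(p-1)) = -1 by field_simp, Real.rpow_neg_one, div_inv_eq_mul,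
      mul_comm]
  have hE3 : 1 - (κ ^ (-(1/(p-1))) - 1) ^ (-(p-1)) = κ * D := by
    rw [hE2, hD]; field_simp
  have hB : (c/2) ^ q * (1 - ((c/2) ^ (-q) - 1) ^ (-(p-1))) ^ (-(1/(p-1)))
      = D ^ (-(1/(p-1))) := by
    rw [hB2, hE3, hB1, Real.mul_rpow hκpos.le hDpos.le, ← mul_assoc,
      ← Real.rpow_add hκpos]
    simp
  calc ENNReal.ofReal ((c / 2) ^ q *
        (1 - ((c / 2) ^ (-q) - 1) ^ (-(p - 1))) ^ (-(1 / (p - 1))))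
      = ENNReal.ofReal (D ^ (-(1/(p-1)))) := by rw [hB]
    _ ≤ ENNReal.ofReal t := ENNReal.ofReal_le_ofReal htD
    _ = ℙ A := ENNReal.ofReal_toReal hfinA
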